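/- arXiv:1611.07543 — 2 statements merged into one kernel-verified Lean document; each statement's English description precedes it below -/
import Mathlib

section
/- Let G be a topologically finitely generated group (with d(G) = d) and let 1 → K → E → G → 1 be an extension with K a finite minimal normal subgroup of E that is abelian. Then E can be topologically generated by d + 1 elements. -/
/-- If `K` is a finite abelian minimal normal subgroup of `E` and the quotient
`G = E/K` is generated by `d` elements, then `E` is generated by `d + 1` elements. -/
theorem stmt_5 (E : Type*) [Group E] (d : ℕ) (K : Subgroup E) [nK : K.Normal] [Finite K]
    (hbot : K ≠ ⊥)
    (habel : ∀ a b : E, a ∈ K → b ∈ K → a * b = b * a)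
    (hmin : ∀ N : Subgroup E, N.Normal → N ≤ K → N = ⊥ ∨ N = K)
    (hG : ∃ T : Finset (E ⧸ K), T.card ≤ d ∧ Subgroup.closure (T : Set (E ⧸ K)) = ⊤) :
    ∃ T : Finset E, T.card ≤ d + 1 ∧ Subgroup.closure (T : Set E) = ⊤ := by
  classical
  obtain ⟨T, hTcard, hTtop⟩ := hG
  obtain ⟨⟨k, hkK⟩, hk1⟩ := Subgroup.ne_bot_iff_exists_ne_one.mp hbot
  have hk1' : k ≠ 1 := fun h => hk1 (Subtype.ext h)
  set S : Finset E := T.image Quotient.out with hS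
  refine ⟨insert k S, ?_, ?_⟩
  · calc (insert k S).card ≤ S.card + 1 := Finset.card_insert_le _ _
      _ ≤ T.card + 1 := by
          rw [hS]; exact Nat.add_le_add_right Finset.card_image_le 1
      _ ≤ d + 1 := by omega
  set M := Subgroup.closure ((insert k S : Finset E) : Set E) with hM
  have hmap : M.map (QuotientGroup.mk' K) = ⊤ := by
    rw [hM, MonoidHom.map_closure, eq_top_iff, ← hTtop]
    apply Subgroup.closure_mono
    intro q hq
    refine ⟨q.out, ?_, q.out_eq'⟩
    simp only [Finset.coe_insert, Set.mem_insert_iff]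
    right
    exact_mod_cast Finset.mem_image_of_mem _ hq
  have hdecomp : ∀ e : E, ∃ m ∈ M, ∃ x ∈ K, e = m * x := by
    intro e
    have he : QuotientGroup.mk' K e ∈ M.map (QuotientGroup.mk' K) := by
      rw [hmap]; trivial
    obtain ⟨m, hm, hme⟩ := he
    refine ⟨m, hm, m⁻¹ * e, ?_, by group⟩
    have h1 : QuotientGroup.mk' K (m⁻¹ * e) = 1 := by
      rw [map_mul, map_inv, hme]
      group
    rwa [QuotientGroup.mk'_apply, QuotientGroup.eq_one_iff] at h1
  have hNnormal : (M ⊓ K).Normal := by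
    constructor
    intro n hn e
    obtain ⟨m, hm, x, hx, rfl⟩ := hdecomp e
    obtain ⟨hnM, hnK⟩ := hn
    have hx' : x * n * x⁻¹ = n := by rw [habel x n hx hnK]; group
    have key : (m * x) * n * (m * x)⁻¹ = m * (x * n * x⁻¹) * m⁻¹ := by group
    rw [hx'] at key
    rw [key]
    exact ⟨M.mul_mem (M.mul_mem hm hnM) (M.inv_mem hm), nK.conj_mem n hnK m⟩
  have hNK : M ⊓ K = K := by
    rcases hmin (M ⊓ K) hNnormal inf_le_right with h | h
    · exfalso
      have hkM : k ∈ M := Subgroup.subset_closure (by simp)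
      have hkN : k ∈ M ⊓ K := ⟨hkM, hkK⟩
      rw [h] at hkN
      exact hk1' (Subgroup.mem_bot.mp hkN)
    · exact h
  have hKM : K ≤ M := by rw [← hNK]; exact inf_le_left
  rw [eq_top_iff]
  intro e _
  obtain ⟨m, hm, x, hx, rfl⟩ := hdecomp e
  exact M.mul_mem hm (hKM hx)
end

section
/- Let F be a free group on d ≥ 2 generators and p a prime. The number of equivalence classes of irreducible n-dimensional representations of F over F_p satisfies r_n(F, F_p) ≥ c_p^d · p^{n²(d−1)}, where c_p = 1 − 1/p − 1/p². -/
/-- A representation `ρ : F →* GL_n(F_p)` is irreducible if the only invariant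
submodules of `F_p^n` are `0` and everything. -/
def MatrixIrreducible {Γ : Type*} [Group Γ] {n p : ℕ}
    (ρ : Γ →* GL (Fin n) (ZMod p)) : Prop :=
  ∀ W : Submodule (ZMod p) (Fin n → ZMod p),
    (∀ g : Γ, ∀ x ∈ W, Matrix.mulVec ((ρ g : Matrix (Fin n) (Fin n) (ZMod p))) x ∈ W) →
      W = ⊥ ∨ W = ⊤

open Module

variable {n p : ℕ} [Fact p.Prime]

-- action of GL on submodules
noncomputable instance glAct : MulAction (GL (Fin n) (ZMod p))
    (Submodule (ZMod p) (Fin n → ZMod p)) where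
  smul g W := W.map (Matrix.mulVecLin (g : Matrix (Fin n) (Fin n) (ZMod p)))
  one_smul W := by
    show W.map _ = W
    simp [Matrix.mulVecLin_one]
  mul_smul g h W := by
    show W.map _ = (W.map _).map _
    rw [Units.val_mul, Matrix.mulVecLin_mul, Submodule.map_comp]

lemma glAct_smul_def (g : GL (Fin n) (ZMod p)) (W : Submodule (ZMod p) (Fin n → ZMod p)) :
    g • W = W.map (Matrix.mulVecLin (g : Matrix (Fin n) (Fin n) (ZMod p))) := rfl

lemma smul_eq_of_invariant (g : GL (Fin n) (ZMod p)) (W : Submodule (ZMod p) (Fin n → ZMod p))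
    (h1 : ∀ x ∈ W, Matrix.mulVec (g : Matrix (Fin n) (Fin n) (ZMod p)) x ∈ W)
    (h2 : ∀ x ∈ W, Matrix.mulVec ((g⁻¹ : GL (Fin n) (ZMod p)) : Matrix (Fin n) (Fin n) (ZMod p)) x ∈ W) :
    g • W = W := by
  have hle : g • W ≤ W := by
    rw [glAct_smul_def]
    rintro x ⟨y, hy, rfl⟩
    exact h1 y hy
  have hle' : g⁻¹ • W ≤ W := by
    rw [glAct_smul_def]
    rintro x ⟨y, hy, rfl⟩
    exact h2 y hy
  refine le_antisymm hle ?_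
  conv_lhs => rw [← smul_inv_smul g W]
  rw [glAct_smul_def g (g⁻¹ • W), glAct_smul_def g W]
  exact Submodule.map_mono hle'
variable {n p : ℕ} [Fact p.Prime]

/-- GL element as a linear equiv -/
noncomputable def glE (g : GL (Fin n) (ZMod p)) :
    (Fin n → ZMod p) ≃ₗ[ZMod p] (Fin n → ZMod p) :=
  (Matrix.GeneralLinearGroup.toLin g).toLinearEquiv

lemma glE_coe (g : GL (Fin n) (ZMod p)) :
    (glE g : (Fin n → ZMod p) →ₗ[ZMod p] (Fin n → ZMod p))
      = Matrix.mulVecLin (g : Matrix (Fin n) (Fin n) (ZMod p)) := rfl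

lemma finrank_smul (g : GL (Fin n) (ZMod p)) (W : Submodule (ZMod p) (Fin n → ZMod p)) :
    finrank (ZMod p) (g • W : Submodule (ZMod p) (Fin n → ZMod p)) = finrank (ZMod p) W := by
  have h : (g • W : Submodule (ZMod p) (Fin n → ZMod p))
      = W.map ((glE g : (Fin n → ZMod p) →ₗ[ZMod p] (Fin n → ZMod p))) := by
    rw [glE_coe]; rfl
  rw [h, LinearEquiv.finrank_map_eq]

lemma exists_smul_eq_finrank (W W' : Submodule (ZMod p) (Fin n → ZMod p))
    (h : finrank (ZMod p) W = finrank (ZMod p) W') :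
    ∃ g : GL (Fin n) (ZMod p), g • W = W' := by
  obtain ⟨U, hU⟩ := Submodule.exists_isCompl W
  obtain ⟨U', hU'⟩ := Submodule.exists_isCompl W'
  have hWU := Submodule.finrank_add_eq_of_isCompl hU
  have hWU' := Submodule.finrank_add_eq_of_isCompl hU'
  have hUU' : finrank (ZMod p) U = finrank (ZMod p) U' := by omega
  let eW : W ≃ₗ[ZMod p] W' := LinearEquiv.ofFinrankEq _ _ h
  let eU : U ≃ₗ[ZMod p] U' := LinearEquiv.ofFinrankEq _ _ hUU'
  let e : (Fin n → ZMod p) ≃ₗ[ZMod p] (Fin n → ZMod p) :=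
    (Submodule.prodEquivOfIsCompl W U hU).symm ≪≫ₗ (eW.prodCongr eU) ≪≫ₗ
      (Submodule.prodEquivOfIsCompl W' U' hU')
  have key : ∀ w : W, e (w : Fin n → ZMod p) ∈ W' := by
    intro w
    have : e (w : Fin n → ZMod p) = (eW w : Fin n → ZMod p) := by
      show (Submodule.prodEquivOfIsCompl W' U' hU') ((eW.prodCongr eU)
        ((Submodule.prodEquivOfIsCompl W U hU).symm (w : Fin n → ZMod p))) = _
      rw [Submodule.prodEquivOfIsCompl_symm_apply_left]
      simp [Submodule.coe_prodEquivOfIsCompl]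
    rw [this]; exact (eW w).2
  have he : W.map (e : (Fin n → ZMod p) →ₗ[ZMod p] _) = W' := by
    have hle : W.map (e : (Fin n → ZMod p) →ₗ[ZMod p] _) ≤ W' := by
      rintro x ⟨y, hy, rfl⟩
      exact key ⟨y, hy⟩
    apply Submodule.eq_of_le_of_finrank_eq hle
    rw [LinearEquiv.finrank_map_eq, h]
  let gl : GL (Fin n) (ZMod p) ≃* ((Fin n → ZMod p) ≃ₗ[ZMod p] (Fin n → ZMod p)) :=
    (Matrix.GeneralLinearGroup.toLin).trans
      (LinearMap.GeneralLinearGroup.generalLinearEquiv (ZMod p) (Fin n → ZMod p))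
  refine ⟨gl.symm e, ?_⟩
  have hg : glE (gl.symm e) = e := gl.apply_symm_apply e
  rw [glAct_smul_def, ← glE_coe, hg, he]

lemma orbit_eq_rank (W : Submodule (ZMod p) (Fin n → ZMod p)) :
    MulAction.orbit (GL (Fin n) (ZMod p)) W
      = {W' : Submodule (ZMod p) (Fin n → ZMod p) | finrank (ZMod p) W' = finrank (ZMod p) W} := by
  ext W'
  constructor
  · rintro ⟨g, rfl⟩
    exact finrank_smul g W
  · intro h
    obtain ⟨g, hg⟩ := exists_smul_eq_finrank W W' h.symm
    exact ⟨g, hg⟩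

lemma stab_card_mul (W : Submodule (ZMod p) (Fin n → ZMod p)) :
    Nat.card (MulAction.stabilizer (GL (Fin n) (ZMod p)) W)
      * Nat.card {W' : Submodule (ZMod p) (Fin n → ZMod p) //
          finrank (ZMod p) W' = finrank (ZMod p) W}
      = Nat.card (GL (Fin n) (ZMod p)) := by
  classical
  haveI : Fintype (MulAction.orbit (GL (Fin n) (ZMod p)) W) := Fintype.ofFinite _
  haveI : Fintype (MulAction.stabilizer (GL (Fin n) (ZMod p)) W) := Fintype.ofFinite _
  have h := MulAction.card_orbit_mul_card_stabilizer_eq_card_group (GL (Fin n) (ZMod p)) W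
  have e : MulAction.orbit (GL (Fin n) (ZMod p)) W ≃
      {W' : Submodule (ZMod p) (Fin n → ZMod p) //
        finrank (ZMod p) W' = finrank (ZMod p) W} := Equiv.setCongr (orbit_eq_rank W)
  rw [← Nat.card_congr e, Nat.card_eq_fintype_card, Nat.card_eq_fintype_card,
    Nat.card_eq_fintype_card, mul_comm]
  exact h

variable {n p : ℕ} [Fact p.Prime]

noncomputable instance : Fintype (Submodule (ZMod p) (Fin n → ZMod p)) := by
  haveI : NeZero p := ⟨(Fact.out : p.Prime).pos.ne'⟩
  exact Fintype.ofFinite _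

-- graph matrix
noncomputable def graphMat {k : ℕ} (hk : k < n) (B : Matrix (Fin (n - k)) (Fin k) (ZMod p)) :
    Matrix (Fin n) (Fin k) (ZMod p) :=
  fun i j => if h : (i : ℕ) < k then (if (i : ℕ) = (j : ℕ) then 1 else 0)
    else B ⟨(i : ℕ) - k, by omega⟩ j

lemma graphMat_mulVec_lt {k : ℕ} (hk : k < n) (B : Matrix (Fin (n - k)) (Fin k) (ZMod p))
    (y : Fin k → ZMod p) (i : Fin n) (h : (i : ℕ) < k) :
    (graphMat hk B).mulVec y i = y ⟨i, h⟩ := by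
  rw [Matrix.mulVec, dotProduct]
  rw [Finset.sum_eq_single (⟨(i : ℕ), h⟩ : Fin k)]
  · simp [graphMat, h]
  · intro b _ hb
    have : ¬ ((i : ℕ) = (b : ℕ)) := by
      intro hc; apply hb; exact Fin.ext hc.symm
    simp [graphMat, h, this]
  · simp

lemma graphMat_mulVec_ge {k : ℕ} (hk : k < n) (B : Matrix (Fin (n - k)) (Fin k) (ZMod p))
    (y : Fin k → ZMod p) (i : Fin n) (h : ¬ (i : ℕ) < k) :
    (graphMat hk B).mulVec y i = ∑ j, B ⟨(i : ℕ) - k, by omega⟩ j * y j := by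
  rw [Matrix.mulVec, dotProduct]
  congr 1; ext j; simp [graphMat, h]

lemma graphMat_inj {k : ℕ} (hk : k < n) (B : Matrix (Fin (n - k)) (Fin k) (ZMod p)) :
    Function.Injective ((graphMat hk B).mulVecLin) := by
  rw [← LinearMap.ker_eq_bot, LinearMap.ker_eq_bot']
  intro y hy
  ext j
  have := congrFun hy (⟨(j : ℕ), lt_trans j.2 hk⟩ : Fin n)
  rw [Matrix.mulVecLin_apply] at this
  rw [graphMat_mulVec_lt hk B y _ j.2] at this
  simpa using this

noncomputable def graphSub {k : ℕ} (hk : k < n) (B : Matrix (Fin (n - k)) (Fin k) (ZMod p)) :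
    Submodule (ZMod p) (Fin n → ZMod p) :=
  LinearMap.range ((graphMat hk B).mulVecLin)

lemma graphSub_finrank {k : ℕ} (hk : k < n) (B : Matrix (Fin (n - k)) (Fin k) (ZMod p)) :
    finrank (ZMod p) (graphSub hk B) = k := by
  rw [graphSub, LinearMap.finrank_range_of_inj (graphMat_inj hk B)]
  simp [Module.finrank_fintype_fun_eq_card]

lemma graphSub_inj {k : ℕ} (hk : k < n) : Function.Injective (graphSub (p := p) hk) := by
  intro B B' hBB
  ext i j
  -- the vector (graphMat B).mulVec (single j 1) lies in graphSub B = graphSub B'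
  have hmem : (graphMat hk B).mulVec (Pi.single j 1) ∈ graphSub hk B' := by
    rw [← hBB]; exact ⟨Pi.single j 1, rfl⟩
  obtain ⟨y, hy⟩ := hmem
  rw [Matrix.mulVecLin_apply] at hy
  -- y must be single j 1
  have hyv : y = Pi.single j 1 := by
    ext j'
    have := congrFun hy (⟨(j' : ℕ), lt_trans j'.2 hk⟩ : Fin n)
    rw [graphMat_mulVec_lt hk B' y _ j'.2, graphMat_mulVec_lt hk B _ _ j'.2] at this
    simpa using this
  subst hyv
  -- now compare at row i (shifted)
  have hin : ¬ ((⟨(i : ℕ) + k, by omega⟩ : Fin n) : ℕ) < k := by simp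
  have := congrFun hy (⟨(i : ℕ) + k, by omega⟩ : Fin n)
  rw [graphMat_mulVec_ge hk B' _ _ hin, graphMat_mulVec_ge hk B _ _ hin] at this
  have hsimp : ∀ (C : Matrix (Fin (n - k)) (Fin k) (ZMod p)) (hh : (i:ℕ) + k - k < n - k),
      ∑ j', C ⟨(i : ℕ) + k - k, hh⟩ j' * (Pi.single j 1 : Fin k → ZMod p) j' = C i j := by
    intro C hh
    rw [Finset.sum_eq_single j]
    · simp only [Pi.single_eq_same, mul_one]
      congr 1; ext; simp
    · intro b _ hb; simp [Pi.single_eq_of_ne hb]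
    · simp
  rw [hsimp B' _, hsimp B _] at this
  exact this.symm

lemma card_rank_k_ge {k : ℕ} (hk1 : 1 ≤ k) (hk : k < n) :
    p ^ (k * (n - k)) ≤
      Fintype.card {W : Submodule (ZMod p) (Fin n → ZMod p) // finrank (ZMod p) W = k} := by
  haveI : NeZero p := ⟨(Fact.out : p.Prime).pos.ne'⟩
  have : Function.Injective (fun B : Matrix (Fin (n - k)) (Fin k) (ZMod p) =>
      (⟨graphSub hk B, graphSub_finrank hk B⟩ :
        {W : Submodule (ZMod p) (Fin n → ZMod p) // finrank (ZMod p) W = k})) := by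
    intro B B' hBB'
    exact graphSub_inj hk (congrArg Subtype.val hBB')
  have hcard := Fintype.card_le_of_injective _ this
  calc p ^ (k * (n - k)) = Fintype.card (Matrix (Fin (n - k)) (Fin k) (ZMod p)) := by
        simp [Matrix, Fintype.card_fun, ZMod.card]
        erw [Fintype.card_fun, Fintype.card_fun, ZMod.card, Fintype.card_fin, Fintype.card_fin, ← pow_mul]
      _ ≤ _ := hcard
lemma lemA (x : ℝ) (hx0 : 0 ≤ x) (hx : x ≤ 1/2) :
    ∀ m, 1 ≤ m → 1 - x - x^2 + x^(m+1) ≤ ∏ j ∈ Finset.range m, (1 - x^(j+1)) := by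
  have hx1 : x ≤ 1 := by linarith
  intro m hm
  induction m, hm using Nat.le_induction with
  | base =>
    rw [Finset.prod_range_one]
    norm_num
  | succ m hm ih =>
    rw [Finset.prod_range_succ]
    have h0 : x^(m+1) ≤ 1 := pow_le_one₀ hx0 hx1
    have h1 : (0:ℝ) ≤ 1 - x^(m+1) := by linarith
    have h2 := mul_le_mul_of_nonneg_right ih h1
    refine le_trans ?_ h2
    have hpow : x^(m+1) ≤ x^2 := pow_le_pow_of_le_one hx0 hx1 (by omega)
    have key : 0 ≤ x^(m+1) * (x^2 - x^(m+1)) :=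
      mul_nonneg (pow_nonneg hx0 _) (by linarith)
    have e2 : x^(m+1+1) = x^(m+1) * x := by ring
    nlinarith [key]

lemma nat_rank_bound {k n : ℕ} (hk1 : 1 ≤ k) (hk : k < n) : n - 1 ≤ k * (n - k) := by
  obtain ⟨b, hb⟩ : ∃ b, n - k = b + 1 := ⟨n - k - 1, by omega⟩
  rw [hb, Nat.mul_succ]
  have h1 : b ≤ k * b := Nat.le_mul_of_pos_left b (by omega)
  omega

lemma lemB (x : ℝ) (hx0 : 0 ≤ x) (hx : x ≤ 1/2) (n : ℕ) (hn : 1 ≤ n) :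
    ∑ k ∈ Finset.Ico 1 n, x^(k*(n-k)) ≤ x + x^2 := by
  have hx1 : x ≤ 1 := by linarith
  have h1 : ∑ k ∈ Finset.Ico 1 n, x^(k*(n-k)) ≤ (Finset.Ico 1 n).card • x^(n-1) :=
    Finset.sum_le_card_nsmul _ _ _ (fun k hk => by
      rw [Finset.mem_Ico] at hk
      exact pow_le_pow_of_le_one hx0 hx1 (nat_rank_bound hk.1 hk.2))
  rw [Nat.card_Ico, nsmul_eq_mul] at h1
  refine h1.trans ?_
  rcases Nat.lt_or_ge n 4 with h4 | h4
  · interval_cases n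
    · norm_num; positivity
    · norm_num; nlinarith [mul_nonneg hx0 hx0]
    · norm_num; nlinarith [mul_nonneg hx0 (sub_nonneg.2 hx1)]
  · -- n ≥ 4 : (n-1) * x^(n-1) ≤ x
    have hc : ((n - 1 : ℕ) : ℝ) ≤ 2^(n-2) := by
      have h2 : (n - 1 : ℕ) ≤ 2^(n-2) := by
        have := Nat.lt_two_pow_self (n := n-2)
        omega
      calc ((n - 1 : ℕ) : ℝ) ≤ ((2^(n-2) : ℕ) : ℝ) := by exact_mod_cast h2
        _ = 2^(n-2) := by push_cast; ring
    have hp2 : x^(n-2) ≤ (1/2 : ℝ)^(n-2) := pow_le_pow_left₀ hx0 hx (n-2)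
    have key : ((n - 1 : ℕ) : ℝ) * x^(n-2) ≤ 1 := by
      calc ((n - 1 : ℕ) : ℝ) * x^(n-2) ≤ 2^(n-2) * (1/2:ℝ)^(n-2) := by
            apply mul_le_mul hc hp2 (pow_nonneg hx0 _) (by positivity)
        _ = 1 := by rw [← mul_pow]; norm_num
    have he : x^(n-1) = x^(n-2) * x := by
      rw [← pow_succ]
      congr 1
      omega
    rw [he]
    have : ((n-1:ℕ):ℝ) * (x^(n-2) * x) = (((n-1:ℕ):ℝ) * x^(n-2)) * x := by ring
    rw [this]
    have hkx := mul_le_mul_of_nonneg_right key hx0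
    nlinarith [sq_nonneg x]

set_option maxHeartbeats 2000000 in
lemma irr_count (d : ℕ) (hd : 2 ≤ d) (hn : 1 ≤ n) :
    (1 - (p:ℝ)⁻¹ - ((p:ℝ)⁻¹)^2) * (Nat.card (GL (Fin n) (ZMod p)) : ℝ)^d
      ≤ (Nat.card {f : Fin d → GL (Fin n) (ZMod p) //
          MatrixIrreducible (FreeGroup.lift f)} : ℝ) := by
  classical
  haveI : NeZero p := ⟨(Fact.out : p.Prime).pos.ne'⟩
  have hp2 : (2:ℝ) ≤ p := by exact_mod_cast (Fact.out : p.Prime).two_le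
  set x : ℝ := (p:ℝ)⁻¹ with hxdef
  have hx0 : 0 ≤ x := by positivity
  have hxh : x ≤ 1/2 := by
    rw [hxdef]
    rw [show (1:ℝ)/2 = (2:ℝ)⁻¹ by norm_num]
    exact inv_anti₀ (by norm_num) hp2
  have hx1 : x ≤ 1 := by linarith
  set g : ℕ := Nat.card (GL (Fin n) (ZMod p)) with hgdef
  have hgf : g = Fintype.card (GL (Fin n) (ZMod p)) := Nat.card_eq_fintype_card
  set P : (Fin d → GL (Fin n) (ZMod p)) → Prop :=
    fun f => MatrixIrreducible (FreeGroup.lift f) with hPdef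
  set S : Finset (Submodule (ZMod p) (Fin n → ZMod p)) :=
    Finset.univ.filter (fun W => W ≠ ⊥ ∧ W ≠ ⊤) with hSdef
  set sb : Submodule (ZMod p) (Fin n → ZMod p) → ℕ :=
    fun W => Nat.card (MulAction.stabilizer (GL (Fin n) (ZMod p)) W) with hsbdef
  set N : ℕ → ℕ := fun k =>
    Fintype.card {W : Submodule (ZMod p) (Fin n → ZMod p) // finrank (ZMod p) W = k}
    with hNdef
  have hrkfun : finrank (ZMod p) (Fin n → ZMod p) = n := by
    simp [Module.finrank_fintype_fun_eq_card]
  -- step 1 : reducible functions lie in stabilizer cubes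
  have hsub : Finset.univ.filter (fun f => ¬ P f) ⊆
      S.biUnion (fun W => Finset.univ.filter
        (fun f : Fin d → GL (Fin n) (ZMod p) =>
          ∀ i, f i ∈ MulAction.stabilizer (GL (Fin n) (ZMod p)) W)) := by
    intro f hf
    rw [Finset.mem_filter] at hf
    have hf' := hf.2
    rw [hPdef] at hf'
    unfold MatrixIrreducible at hf'
    obtain ⟨W, hW⟩ := Classical.not_forall.mp hf'
    rw [Classical.not_imp, not_or] at hW
    obtain ⟨hinv, hb, ht⟩ := hW
    rw [Finset.mem_biUnion]
    refine ⟨W, by simp [hSdef, hb, ht], ?_⟩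
    rw [Finset.mem_filter]
    refine ⟨Finset.mem_univ _, fun i => ?_⟩
    rw [MulAction.mem_stabilizer_iff]
    apply smul_eq_of_invariant
    · have h := hinv (FreeGroup.of i)
      rwa [FreeGroup.lift_apply_of] at h
    · have h := hinv ((FreeGroup.of i)⁻¹)
      rwa [map_inv, FreeGroup.lift_apply_of] at h
  -- step 2 : cardinality of each cube
  have hcube : ∀ W : Submodule (ZMod p) (Fin n → ZMod p),
      (Finset.univ.filter (fun f : Fin d → GL (Fin n) (ZMod p) =>
        ∀ i, f i ∈ MulAction.stabilizer (GL (Fin n) (ZMod p)) W)).card = (sb W)^d := by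
    intro W
    rw [← Fintype.card_subtype]
    rw [Fintype.card_congr (Equiv.subtypePiEquivPi (p := fun _ g =>
      g ∈ MulAction.stabilizer (GL (Fin n) (ZMod p)) W))]
    rw [Fintype.card_fun, Fintype.card_fin, hsbdef]
    congr 1
    exact Nat.card_eq_fintype_card.symm
  have hbad : (Finset.univ.filter (fun f => ¬ P f)).card ≤ ∑ W ∈ S, (sb W)^d := by
    calc (Finset.univ.filter (fun f => ¬ P f)).card
        ≤ (S.biUnion _).card := Finset.card_le_card hsub
      _ ≤ ∑ W ∈ S, (Finset.univ.filter (fun f : Fin d → GL (Fin n) (ZMod p) =>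
            ∀ i, f i ∈ MulAction.stabilizer (GL (Fin n) (ZMod p)) W)).card :=
          Finset.card_biUnion_le
      _ = ∑ W ∈ S, (sb W)^d := by
          exact Finset.sum_congr rfl (fun W _ => hcube W)
  -- basic rank facts about members of S
  have hrange : ∀ W ∈ S, finrank (ZMod p) W ∈ Finset.Ico 1 n := by
    intro W hW
    rw [hSdef, Finset.mem_filter] at hW
    obtain ⟨-, hb, ht⟩ := hW
    rw [Finset.mem_Ico]
    constructor
    · rcases Nat.eq_zero_or_pos (finrank (ZMod p) W) with h0 | h1
      · exact absurd (Submodule.finrank_eq_zero.mp h0) hb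
      · exact h1
    · rcases lt_or_eq_of_le (Submodule.finrank_le W) with h | h
      · omega
      · exfalso
        apply ht
        apply Submodule.eq_top_of_finrank_eq
        rw [h, hrkfun]
  -- the fiberwise sums, real-valued
  have hgpos : 0 < g := by
    rw [hgf]; exact Fintype.card_pos
  have hfib : (∑ W ∈ S, ((sb W : ℝ))^d) ≤ (g:ℝ)^d * (x + x^2) := by
    rw [← Finset.sum_fiberwise_of_maps_to hrange (fun W => ((sb W : ℝ))^d)]
    have hinner : ∀ k ∈ Finset.Ico 1 n,
        (∑ W ∈ S.filter (fun W : Submodule (ZMod p) (Fin n → ZMod p) => finrank (ZMod p) W = k), ((sb W : ℝ))^d)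
          ≤ (g:ℝ)^d * x^(k*(n-k)) := by
      intro k hk
      rw [Finset.mem_Ico] at hk
      have hSk : S.filter (fun W : Submodule (ZMod p) (Fin n → ZMod p) => finrank (ZMod p) W = k)
          = Finset.univ.filter (fun W : Submodule (ZMod p) (Fin n → ZMod p) => finrank (ZMod p) W = k) := by
        ext W
        simp only [hSdef, Finset.mem_filter, Finset.filter_filter, Finset.mem_univ,
          true_and]
        constructor
        · tauto
        · intro hrk
          refine ⟨⟨?_, ?_⟩, hrk⟩
          · intro hbot; rw [hbot] at hrk; rw [finrank_bot] at hrk; omega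
          · intro htop; rw [htop] at hrk
            rw [finrank_top, hrkfun] at hrk; omega
      have hNkpos : (0:ℝ) < N k := by
        have := card_rank_k_ge (p := p) hk.1 hk.2
        have h2 : 0 < N k := lt_of_lt_of_le (pow_pos (Fact.out : p.Prime).pos _) this
        exact_mod_cast h2
      have hNk : ((p:ℕ):ℝ)^(k*(n-k)) ≤ (N k : ℝ) := by
        exact_mod_cast card_rank_k_ge (p := p) hk.1 hk.2
      have hval : ∀ W ∈ Finset.univ.filter
          (fun W : Submodule (ZMod p) (Fin n → ZMod p) => finrank (ZMod p) W = k),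
          ((sb W : ℝ))^d = ((g:ℝ) / N k)^d := by
        intro W hW
        rw [Finset.mem_filter] at hW
        have h := stab_card_mul W
        rw [hW.2] at h
        rw [show (Nat.card {W' : Submodule (ZMod p) (Fin n → ZMod p) //
          finrank (ZMod p) W' = k}) = Fintype.card {W' : Submodule (ZMod p) (Fin n → ZMod p) //
          finrank (ZMod p) W' = k} from Nat.card_eq_fintype_card] at h
        have hnat : sb W * N k = g := h
        have hcast : (sb W : ℝ) * (N k : ℝ) = (g : ℝ) := by
          exact_mod_cast hnat
        have : (sb W : ℝ) = (g:ℝ) / N k := by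
          field_simp at hcast ⊢
          linarith [hcast]
        rw [this]
      rw [hSk, Finset.sum_congr rfl hval, Finset.sum_const, nsmul_eq_mul]
      have hcard : (Finset.univ.filter
          (fun W : Submodule (ZMod p) (Fin n → ZMod p) => finrank (ZMod p) W = k)).card
            = N k := (Fintype.card_subtype _).symm
      rw [hcard]
      -- now : N k * (g / N k)^d ≤ g^d * x^(k*(n-k))
      have hd1 : d = (d-1) + 1 := by omega
      have hdiv : (g:ℝ) / N k ≤ (g:ℝ) * x^(k*(n-k)) := by
        have h1 : (g:ℝ) / N k ≤ (g:ℝ) / ((p:ℝ)^(k*(n-k))) := by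
          apply div_le_div_of_nonneg_left (by positivity) (by positivity)
          exact_mod_cast hNk
        refine h1.trans_eq ?_
        rw [div_eq_mul_inv, hxdef, ← inv_pow]
      have hstep : (N k : ℝ) * ((g:ℝ)/N k)^d = (g:ℝ) * ((g:ℝ)/N k)^(d-1) := by
        conv_lhs => rw [hd1]
        rw [pow_succ']
        field_simp
      rw [hstep]
      have h2 : ((g:ℝ)/N k)^(d-1) ≤ ((g:ℝ) * x^(k*(n-k)))^(d-1) :=
        pow_le_pow_left₀ (by positivity) hdiv _
      calc (g:ℝ) * ((g:ℝ)/N k)^(d-1) ≤ (g:ℝ) * ((g:ℝ) * x^(k*(n-k)))^(d-1) := by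
            apply mul_le_mul_of_nonneg_left h2 (by positivity)
        _ = (g:ℝ)^d * (x^(k*(n-k)))^(d-1) := by
            rw [mul_pow, ← mul_assoc, ← pow_succ']
            rw [← hd1]
        _ ≤ (g:ℝ)^d * x^(k*(n-k)) := by
            apply mul_le_mul_of_nonneg_left _ (by positivity)
            conv_rhs => rw [show x^(k*(n-k)) = (x^(k*(n-k)))^1 by ring]
            apply pow_le_pow_of_le_one (by positivity) _ (by omega)
            exact pow_le_one₀ hx0 hx1
    calc ∑ k ∈ Finset.Ico 1 n, (∑ W ∈ S.filter (fun W : Submodule (ZMod p) (Fin n → ZMod p) => finrank (ZMod p) W = k),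
          ((sb W : ℝ))^d)
        ≤ ∑ k ∈ Finset.Ico 1 n, (g:ℝ)^d * x^(k*(n-k)) :=
          Finset.sum_le_sum hinner
      _ = (g:ℝ)^d * ∑ k ∈ Finset.Ico 1 n, x^(k*(n-k)) := by rw [Finset.mul_sum]
      _ ≤ (g:ℝ)^d * (x + x^2) := by
          apply mul_le_mul_of_nonneg_left (lemB x hx0 hxh n hn) (by positivity)
  -- put together
  have hcompl := Finset.card_filter_add_card_filter_not
    (s := (Finset.univ : Finset (Fin d → GL (Fin n) (ZMod p)))) (p := P)
  rw [Finset.card_univ, Fintype.card_fun, Fintype.card_fin] at hcompl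
  have hIrr : (Nat.card {f : Fin d → GL (Fin n) (ZMod p) //
      MatrixIrreducible (FreeGroup.lift f)}) = (Finset.univ.filter P).card := by
    rw [Nat.card_eq_fintype_card, Fintype.card_subtype]
  rw [hIrr]
  have hbadR : ((Finset.univ.filter (fun f => ¬ P f)).card : ℝ) ≤ (g:ℝ)^d * (x + x^2) := by
    refine le_trans ?_ hfib
    exact_mod_cast hbad
  have hcomplR : ((Finset.univ.filter P).card : ℝ)
      + ((Finset.univ.filter (fun f => ¬ P f)).card : ℝ) = (g:ℝ)^d := by
    rw [← hgf] at hcompl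
    exact_mod_cast hcompl
  nlinarith [hbadR, hcomplR]

/-- conjugacy relation on irreducible tuples -/
def conjRel (d n p : ℕ) :
    Setoid {f : Fin d → GL (Fin n) (ZMod p) // MatrixIrreducible (FreeGroup.lift f)} where
  r f f' := ∃ u : GL (Fin n) (ZMod p), ∀ i, f'.1 i = u * f.1 i * u⁻¹
  iseqv := by
    constructor
    · intro f; exact ⟨1, fun i => by simp⟩
    · rintro f f' ⟨u, hu⟩
      refine ⟨u⁻¹, fun i => ?_⟩
      rw [hu i]; group
    · rintro a b c ⟨u, hu⟩ ⟨v, hv⟩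
      refine ⟨v * u, fun i => ?_⟩
      rw [hv i, hu i]; group

set_option maxHeartbeats 2000000 in
lemma quot_bound (d n p : ℕ) [Fact p.Prime] :
    Nat.card {f : Fin d → GL (Fin n) (ZMod p) // MatrixIrreducible (FreeGroup.lift f)} ≤
      Nat.card (Quotient (conjRel d n p)) * Nat.card (GL (Fin n) (ZMod p)) := by
  classical
  haveI : NeZero p := ⟨(Fact.out : p.Prime).pos.ne'⟩
  haveI : Fintype (Quotient (conjRel d n p)) := Fintype.ofFinite _
  rw [Nat.card_eq_fintype_card, Nat.card_eq_fintype_card, Nat.card_eq_fintype_card]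
  rw [← Fintype.card_congr (Equiv.sigmaFiberEquiv
    (fun f : {f : Fin d → GL (Fin n) (ZMod p) // MatrixIrreducible (FreeGroup.lift f)} =>
      (Quotient.mk (conjRel d n p) f)))]
  rw [Fintype.card_sigma]
  have hfib : ∀ q : Quotient (conjRel d n p),
      Fintype.card {f : {f : Fin d → GL (Fin n) (ZMod p) //
          MatrixIrreducible (FreeGroup.lift f)} // Quotient.mk (conjRel d n p) f = q}
        ≤ Fintype.card (GL (Fin n) (ZMod p)) := by
    intro q
    letI sd : Setoid {f : Fin d → GL (Fin n) (ZMod p) //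
        MatrixIrreducible (FreeGroup.lift f)} := conjRel d n p
    have hout : ∀ fq : {f : {f : Fin d → GL (Fin n) (ZMod p) //
        MatrixIrreducible (FreeGroup.lift f)} // Quotient.mk (conjRel d n p) f = q},
        ∃ u : GL (Fin n) (ZMod p), ∀ i, (Quotient.out q).1 i = u * fq.1.1 i * u⁻¹ := by
      intro fq
      have hrel : fq.1 ≈ Quotient.out q := Quotient.exact (by rw [fq.2, Quotient.out_eq])
      exact hrel
    apply Fintype.card_le_of_injective (fun fq => Classical.choose (hout fq))
    intro f1 f2 h12
    have h1 := Classical.choose_spec (hout f1)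
    have h2 := Classical.choose_spec (hout f2)
    have h12' : Classical.choose (hout f1) = Classical.choose (hout f2) := h12
    rw [h12'] at h1
    apply Subtype.ext; apply Subtype.ext; funext i
    have e1 := h1 i
    have e2 := h2 i
    rw [e1] at e2
    exact mul_left_cancel (mul_right_cancel e2)
  calc ∑ q : Quotient (conjRel d n p), Fintype.card {f : {f : Fin d → GL (Fin n) (ZMod p) //
          MatrixIrreducible (FreeGroup.lift f)} // Quotient.mk (conjRel d n p) f = q}
      ≤ ∑ _q : Quotient (conjRel d n p), Fintype.card (GL (Fin n) (ZMod p)) :=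
        Finset.sum_le_sum (fun q _ => hfib q)
    _ = Fintype.card (Quotient (conjRel d n p)) * Fintype.card (GL (Fin n) (ZMod p)) := by
        rw [Finset.sum_const, Finset.card_univ, smul_eq_mul]

lemma gl_card_ge (hn : 1 ≤ n) :
    (1 - (p:ℝ)⁻¹ - ((p:ℝ)⁻¹)^2) * (p:ℝ)^(n^2)
      ≤ (Nat.card (GL (Fin n) (ZMod p)) : ℝ) := by
  haveI : NeZero p := ⟨(Fact.out : p.Prime).pos.ne'⟩
  have hp2 : (2:ℝ) ≤ p := by exact_mod_cast (Fact.out : p.Prime).two_le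
  have hp0 : (0:ℝ) < p := by linarith
  set x : ℝ := (p:ℝ)⁻¹ with hxdef
  have hx0 : 0 ≤ x := by positivity
  have hxh : x ≤ 1/2 := by
    rw [hxdef, show (1:ℝ)/2 = (2:ℝ)⁻¹ by norm_num]
    exact inv_anti₀ (by norm_num) hp2
  have hcard := Matrix.card_GL_field (n := n) (𝔽 := ZMod p)
  rw [ZMod.card] at hcard
  rw [hcard]
  push_cast [Nat.cast_prod]
  have hterm : ∀ i : Fin n, ((p^n - p^(i:ℕ) : ℕ) : ℝ) = (p:ℝ)^n * (1 - x^(n - (i:ℕ))) := by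
    intro i
    have hle : p^(i:ℕ) ≤ p^n := Nat.pow_le_pow_right (Fact.out : p.Prime).pos
      (le_of_lt i.2)
    rw [Nat.cast_sub hle]
    push_cast
    rw [mul_sub, mul_one]
    congr 1
    rw [hxdef, inv_pow, ← div_eq_mul_inv,
      eq_div_iff (by positivity : ((p:ℝ)^(n - (i:ℕ))) ≠ 0), ← pow_add]
    congr 1
    omega
  rw [Finset.prod_congr rfl (fun i _ => hterm i)]
  rw [Finset.prod_mul_distrib, Finset.prod_const, Finset.card_univ, Fintype.card_fin]
  have hpow : ((p:ℝ)^n)^n = (p:ℝ)^(n^2) := by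
    rw [← pow_mul, pow_two]
  rw [hpow]
  rw [mul_comm ((1:ℝ) - x - x^2) ((p:ℝ)^(n^2))]
  apply mul_le_mul_of_nonneg_left _ (by positivity)
  -- ∏ i : Fin n, (1 - x^(n - i)) ≥ 1 - x - x^2
  have hprod : ∏ i : Fin n, (1 - x^(n - (i:ℕ))) = ∏ j ∈ Finset.range n, (1 - x^(j+1)) := by
    rw [Fin.prod_univ_eq_prod_range (fun i => 1 - x^(n - i)) n]
    rw [← Finset.prod_range_reflect (fun j => 1 - x^(j+1)) n]
    apply Finset.prod_congr rfl
    intro j hj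
    rw [Finset.mem_range] at hj
    congr 2
    omega
  rw [hprod]
  have hA := lemA x hx0 hxh n hn
  have hxn : 0 ≤ x^(n+1) := by positivity
  linarith

set_option maxHeartbeats 2000000 in
/-- For the free group `F` on `d ≥ 2` generators and a prime `p`, the number of
equivalence classes of irreducible `n`-dimensional representations of `F` over `F_p`
is at least `c_p^d · p^(n²(d-1))` with `c_p = 1 - 1/p - 1/p²`: there exist that many
pairwise non-conjugate irreducible representations. -/
theorem stmt_19 (d n p : ℕ) (hp : p.Prime) (hd : 2 ≤ d) (hn : 1 ≤ n) :
    ∃ R : Finset (FreeGroup (Fin d) →* GL (Fin n) (ZMod p)),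
      (∀ ρ ∈ R, MatrixIrreducible ρ) ∧
      (∀ ρ ∈ R, ∀ σ ∈ R, ρ ≠ σ →
        ¬ ∃ u : GL (Fin n) (ZMod p), ∀ g, σ g = u * ρ g * u⁻¹) ∧
      (1 - 1 / (p : ℝ) - 1 / (p : ℝ) ^ 2) ^ d * (p : ℝ) ^ (n ^ 2 * (d - 1)) ≤
        (R.card : ℝ) := by
  classical
  haveI : Fact p.Prime := ⟨hp⟩
  haveI : NeZero p := ⟨hp.pos.ne'⟩
  haveI : Fintype (Quotient (conjRel d n p)) := Fintype.ofFinite _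
  refine ⟨Finset.image (fun q : Quotient (conjRel d n p) =>
    FreeGroup.lift ((Quotient.out q).1)) Finset.univ, ?_, ?_, ?_⟩
  · intro ρ hρ
    obtain ⟨q, -, rfl⟩ := Finset.mem_image.mp hρ
    exact (Quotient.out q).2
  · rintro ρ hρ σ hσ hne ⟨u, hu⟩
    obtain ⟨q1, -, rfl⟩ := Finset.mem_image.mp hρ
    obtain ⟨q2, -, rfl⟩ := Finset.mem_image.mp hσ
    apply hne
    have hrel : (conjRel d n p).r (Quotient.out q1) (Quotient.out q2) :=
      ⟨u, fun i => by
        have h := hu (FreeGroup.of i)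
        rwa [FreeGroup.lift_apply_of, FreeGroup.lift_apply_of] at h⟩
    have hq : q1 = q2 := by
      rw [← Quotient.out_eq q1, ← Quotient.out_eq q2]
      exact Quotient.sound hrel
    rw [hq]
  · have hinj : Function.Injective (fun q : Quotient (conjRel d n p) =>
        FreeGroup.lift ((Quotient.out q).1)) := by
      intro q1 q2 h
      have h1 : (Quotient.out q1).1 = (Quotient.out q2).1 :=
        FreeGroup.lift.injective h
      have h2 : Quotient.out q1 = Quotient.out q2 := Subtype.ext h1
      rw [← Quotient.out_eq q1, ← Quotient.out_eq q2, h2]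
    rw [Finset.card_image_of_injective _ hinj, Finset.card_univ]
    -- numeric chain
    have hp2 : (2:ℝ) ≤ p := by exact_mod_cast hp.two_le
    have hp0 : (0:ℝ) < p := by linarith
    have hxeq : 1 / (p:ℝ) = (p:ℝ)⁻¹ := one_div _
    have hx2eq : 1 / (p:ℝ)^2 = ((p:ℝ)⁻¹)^2 := by rw [one_div, inv_pow]
    set c : ℝ := 1 - 1/(p:ℝ) - 1/(p:ℝ)^2 with hcdef
    have hxh : (p:ℝ)⁻¹ ≤ 1/2 := by
      rw [show (1:ℝ)/2 = (2:ℝ)⁻¹ by norm_num]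
      exact inv_anti₀ (by norm_num) hp2
    have hc0 : 0 ≤ c := by
      rw [hcdef, hxeq, hx2eq]
      nlinarith [inv_nonneg.mpr hp0.le]
    have hI := irr_count (p := p) (n := n) d hd hn
    have hG := gl_card_ge (p := p) (n := n) hn
    have hQn := quot_bound d n p
    rw [← hx2eq, ← hxeq, ← hcdef] at hI hG
    set gR : ℝ := (Nat.card (GL (Fin n) (ZMod p)) : ℝ) with hgRdef
    have hgpos : (0:ℝ) < gR := by
      rw [hgRdef]
      have : 0 < Nat.card (GL (Fin n) (ZMod p)) := Nat.card_pos
      exact_mod_cast this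
    have hQR : (Nat.card {f : Fin d → GL (Fin n) (ZMod p) //
        MatrixIrreducible (FreeGroup.lift f)} : ℝ)
          ≤ (Fintype.card (Quotient (conjRel d n p)) : ℝ) * gR := by
      rw [hgRdef, ← Nat.card_eq_fintype_card]
      exact_mod_cast hQn
    have key : c^d * (p:ℝ)^(n^2*(d-1)) * gR
        ≤ (Fintype.card (Quotient (conjRel d n p)) : ℝ) * gR := by
      have e1 : c^d * (p:ℝ)^(n^2*(d-1)) = c * (c * (p:ℝ)^(n^2))^(d-1) := by
        rw [mul_pow, pow_mul, ← mul_assoc]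
        congr 1
        rw [← pow_succ']
        congr 1
        omega
      have e2 : (c * (p:ℝ)^(n^2))^(d-1) ≤ gR^(d-1) :=
        pow_le_pow_left₀ (by positivity) hG _
      calc c^d * (p:ℝ)^(n^2*(d-1)) * gR = c * (c * (p:ℝ)^(n^2))^(d-1) * gR := by rw [e1]
        _ ≤ c * gR^(d-1) * gR := by
            apply mul_le_mul_of_nonneg_right _ hgpos.le
            exact mul_le_mul_of_nonneg_left e2 hc0
        _ = c * gR^d := by
            rw [mul_assoc, ← pow_succ]
            rw [show d - 1 + 1 = d by omega]
        _ ≤ (Nat.card {f : Fin d → GL (Fin n) (ZMod p) //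
              MatrixIrreducible (FreeGroup.lift f)} : ℝ) := hI
        _ ≤ _ := hQR
    exact le_of_mul_le_mul_right key hgpos
end
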